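/- Let K be a kernel on ℝ^d × ℝ^d with ‖r_K‖_{L¹} < ∞, and let A_n = (a_n(λ,λ'))_{λ,λ'∈2^{−n}ℤ^d} be its discretization matrices. Then for every n ∈ ℤ and all λ,λ' ∈ 2^{−n}ℤ^d: |a_n(λ,λ')| ≤ 2^{nd} ∫_{|t| ≤ 3·2^{−n}} r_K(t) dt if |λ−λ'| ≤ 2^{−n+1}, and |a_n(λ,λ')| ≤ r_K((λ−λ')/2) if |λ−λ'| > 2^{−n+1}. -/

import Mathlib

open MeasureTheory Real ENNReal Set Function

noncomputable section

/-- An axis-parallel cube in `ℝ^d` (with the sup norm `|x| = max |x_i|`):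
the closed ball of center `c` and radius `r` (side length `2r`). -/
def Cube {d : ℕ} (c : Fin d → ℝ) (r : ℝ) : Set (Fin d → ℝ) := Metric.closedBall c r

/-- The average `(1/|Q|) ∫_Q f` of `f` over the cube of center `c`, radius `r`. -/
def cubeAvg {d : ℕ} (c : Fin d → ℝ) (r : ℝ) (f : (Fin d → ℝ) → ℝ) : ℝ :=
  (∫ x in Cube c r, f x) / (volume (Cube c r)).toReal

/-- The Muckenhoupt `A_p` condition, with constant `A`, for a weight `w` on `ℝ^d`. -/
def ApBoundWith {d : ℕ} (p : ℝ) (w : (Fin d → ℝ) → ℝ) (A : ℝ) : Prop :=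
  if p = 1 then
    ∀ (c : Fin d → ℝ) (r : ℝ), 0 < r →
      cubeAvg c r w ≤ A * essInf w (volume.restrict (Cube c r))
  else
    ∀ (c : Fin d → ℝ) (r : ℝ), 0 < r →
      cubeAvg c r w * (cubeAvg c r fun x => w x ^ (-1 / (p - 1))) ^ (p - 1) ≤ A

/-- `w` is a Muckenhoupt `A_p` weight. -/
def IsApWeight {d : ℕ} (p : ℝ) (w : (Fin d → ℝ) → ℝ) : Prop :=
  (∀ x, 0 < w x) ∧ LocallyIntegrable w volume ∧ ∃ A, ApBoundWith p w A

/-- The `A_p` bound `A_p(w)`: the smallest constant in the `A_p` condition. -/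
def apBound {d : ℕ} (p : ℝ) (w : (Fin d → ℝ) → ℝ) : ℝ :=
  sInf {A | ApBoundWith p w A}

/-- The weighted norm `‖f‖_{p,w} = (∫ |f|^p w)^{1/p}`. -/
def wNorm {d : ℕ} (p : ℝ) (w : (Fin d → ℝ) → ℝ) (f : (Fin d → ℝ) → ℂ) : ℝ≥0∞ :=
  (∫⁻ x, (‖f x‖₊ : ℝ≥0∞) ^ p * ENNReal.ofReal (w x)) ^ (1 / p)

/-- Membership in the weighted Lebesgue space `L^p_w`. -/
def MemLpw {d : ℕ} (p : ℝ) (w : (Fin d → ℝ) → ℝ) (f : (Fin d → ℝ) → ℂ) : Prop :=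
  AEMeasurable f volume ∧ wNorm p w f < ⊤

/-- Stability of an operator `S` on `L^p_w`:
`‖S f‖_{p,w} ≥ C ‖f‖_{p,w}` for some `C > 0` and all `f ∈ L^p_w`. -/
def HasStability {d : ℕ} (p : ℝ) (w : (Fin d → ℝ) → ℝ)
    (S : ((Fin d → ℝ) → ℂ) → ((Fin d → ℝ) → ℂ)) : Prop :=
  ∃ C : ℝ, 0 < C ∧ ∀ f, MemLpw p w f → ENNReal.ofReal C * wNorm p w f ≤ wNorm p w (S f)

/-- The integral operator `T f (x) = ∫ K(x,y) f(y) dy`. -/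
def intOp {d : ℕ} (K : (Fin d → ℝ) → (Fin d → ℝ) → ℂ) (f : (Fin d → ℝ) → ℂ)
    (x : Fin d → ℝ) : ℂ :=
  ∫ y, K x y * f y

/-- The minimal radially decreasing function dominating the off-diagonal decay of an
`ℝ≥0∞`-valued kernel: `r_F(x) = sup_{|y - y'| ≥ |x|} F(y,y')`. -/
def radDom {d : ℕ} (F : (Fin d → ℝ) → (Fin d → ℝ) → ℝ≥0∞) (x : Fin d → ℝ) : ℝ≥0∞ :=
  ⨆ (y : Fin d → ℝ) (y' : Fin d → ℝ) (_ : ‖x‖ ≤ ‖y - y'‖), F y y'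

/-- `r_K(x) = sup_{|y-y'| ≥ |x|} |K(y,y')|`. -/
def rK {d : ℕ} (K : (Fin d → ℝ) → (Fin d → ℝ) → ℂ) : (Fin d → ℝ) → ℝ≥0∞ :=
  radDom fun y y' => (‖K y y'‖₊ : ℝ≥0∞)

/-- The modified modulus of continuity `ω_δ(K)`. -/
def omegaMod {d : ℕ} (K : (Fin d → ℝ) → (Fin d → ℝ) → ℂ) (δ : ℝ)
    (x y : Fin d → ℝ) : ℝ≥0∞ :=
  if 4 * δ ≤ ‖x - y‖ then
    ⨆ (x' : Fin d → ℝ) (y' : Fin d → ℝ) (_ : ‖x' - x‖ ≤ δ ∧ ‖y' - y‖ ≤ δ),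
      (‖K x' y' - K x y‖₊ : ℝ≥0∞)
  else 0

/-- The localization quantity
`D₀ = ‖r_K‖₁ + sup_{0<δ≤1} δ^{-α} ‖r_K χ_{|·|≤δ}‖₁ + sup_{0<δ≤1} δ^{-α} ‖r_{ω_δ(K)}‖₁`. -/
def D0 {d : ℕ} (α : ℝ) (K : (Fin d → ℝ) → (Fin d → ℝ) → ℂ) : ℝ≥0∞ :=
  (∫⁻ x, rK K x) +
    (⨆ δ ∈ Set.Ioc (0:ℝ) 1,
      ENNReal.ofReal (δ ^ (-α)) * ∫⁻ x in {x : Fin d → ℝ | ‖x‖ ≤ δ}, rK K x) +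
    (⨆ δ ∈ Set.Ioc (0:ℝ) 1,
      ENNReal.ofReal (δ ^ (-α)) * ∫⁻ x, radDom (omegaMod K δ) x)

/-- The index of the level-`n` dyadic cell containing `x`:
`x ∈ 2^{-n}(k + [-1/2,1/2)^d)` iff `haarIdx n x = k`. -/
def haarIdx {d : ℕ} (n : ℤ) (x : Fin d → ℝ) : Fin d → ℤ :=
  fun i => ⌊(2:ℝ) ^ n * x i + 1 / 2⌋

/-- The level-`n` dyadic cell `2^{-n}(k + [-1/2,1/2)^d)`. -/
def haarCell {d : ℕ} (n : ℤ) (k : Fin d → ℤ) : Set (Fin d → ℝ) :=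
  {x | haarIdx n x = k}

/-- Haar scaling function `φ_{n,k}(x) = 2^{nd/2} χ_{[-1/2,1/2)^d}(2^n x - k)`. -/
def haarPhi {d : ℕ} (n : ℤ) (k : Fin d → ℤ) (x : Fin d → ℝ) : ℝ :=
  if haarIdx n x = k then (2:ℝ) ^ (((n : ℝ) * (d : ℝ)) / 2) else 0

/-- The Haar projection `P_n f = Σ_λ ⟨f, φ_{n,2^nλ}⟩ φ_{n,2^nλ}`, i.e. the conditional
expectation on level-`n` dyadic cells. -/
def haarProj {d : ℕ} (n : ℤ) (f : (Fin d → ℝ) → ℂ) (x : Fin d → ℝ) : ℂ :=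
  ((2:ℝ) ^ (n * (d:ℤ)) : ℝ) • ∫ y in haarCell n (haarIdx n x), f y

/-- Entries of the discretization matrix:
`a_n(λ,λ') = 2^{nd} ∫∫ φ_{n,2^nλ}(x) K(x,y) φ_{n,2^nλ'}(y) dy dx`, `λ = 2^{-n} k`. -/
def aMat {d : ℕ} (K : (Fin d → ℝ) → (Fin d → ℝ) → ℂ) (n : ℤ) (k k' : Fin d → ℤ) : ℂ :=
  ((2:ℝ) ^ (n * (d:ℤ)) : ℝ) •
    ∫ x, ∫ y, (haarPhi n k x : ℂ) * K x y * (haarPhi n k' y : ℂ)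

/-- Action of the discretization matrix `A_n` on a sequence. -/
def matApply {d : ℕ} (K : (Fin d → ℝ) → (Fin d → ℝ) → ℂ) (n : ℤ)
    (c : (Fin d → ℤ) → ℂ) (k : Fin d → ℤ) : ℂ :=
  ∑' k' : Fin d → ℤ, aMat K n k k' * c k'

/-- The discretization of the weight `w` at level `n`:
`w_n(λ) = 2^{nd} ∫_{λ + 2^{-n}[-1/2,1/2)^d} w`, `λ = 2^{-n} k`. -/
def wDisc {d : ℕ} (w : (Fin d → ℝ) → ℝ) (n : ℤ) (k : Fin d → ℤ) : ℝ :=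
  ((2:ℝ) ^ (n * (d:ℤ))) * ∫ x in haarCell n k, w x

/-- The weighted sequence norm `‖c‖_{p,v} = (Σ_λ |c(λ)|^p v(λ))^{1/p}`. -/
def dNorm {d : ℕ} (p : ℝ) (v : (Fin d → ℤ) → ℝ) (c : (Fin d → ℤ) → ℂ) : ℝ≥0∞ :=
  (∑' k, (‖c k‖₊ : ℝ≥0∞) ^ p * ENNReal.ofReal (v k)) ^ (1 / p)

/-- The point `λ = 2^{-n} k ∈ 2^{-n} ℤ^d`. -/
def lamOf {d : ℕ} (n : ℤ) (k : Fin d → ℤ) : Fin d → ℝ :=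
  fun i => (2:ℝ) ^ (-n) * (k i : ℝ)

/-- `ψ₀(x) = max(min(2 - |x|, 1), 0)`. -/
def psi0 {d : ℕ} (x : Fin d → ℝ) : ℝ := max (min (2 - ‖x‖) 1) 0

/-- The diagonal entry `ψ₀((λ - k)/N)` of the localization matrix `Ψ_k^N` with
`k = N m ∈ N ℤ^d`, at `λ = 2^{-n} j`. -/
def locW {d : ℕ} (n : ℤ) (N : ℕ) (m : Fin d → ℤ) (j : Fin d → ℤ) : ℝ :=
  psi0 fun i => (lamOf n j i - (N : ℝ) * (m i : ℝ)) / (N : ℝ)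

/-- The discrete box `a + [0, N-1]^d` in `ℤ^d`. -/
def discBox {d : ℕ} (a : Fin d → ℤ) (N : ℕ) : Finset (Fin d → ℤ) :=
  Finset.Icc a fun i => a i + N - 1

/-- The discrete Muckenhoupt `A_p` condition with constant `A`. -/
def DiscApBoundWith {d : ℕ} (p : ℝ) (v : (Fin d → ℤ) → ℝ) (A : ℝ) : Prop :=
  if p = 1 then
    ∀ (a : Fin d → ℤ) (N : ℕ), 0 < N → ∀ k0 ∈ discBox a N,
      (N:ℝ) ^ (-(d:ℤ)) * ∑ k ∈ discBox a N, v k ≤ A * v k0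
  else
    ∀ (a : Fin d → ℤ) (N : ℕ), 0 < N →
      ((N:ℝ) ^ (-(d:ℤ)) * ∑ k ∈ discBox a N, v k) *
        ((N:ℝ) ^ (-(d:ℤ)) * ∑ k ∈ discBox a N, v k ^ (-1 / (p - 1))) ^ (p - 1) ≤ A

/-- The discrete `A_p` bound. -/
def discApBound {d : ℕ} (p : ℝ) (v : (Fin d → ℤ) → ℝ) : ℝ :=
  sInf {A | DiscApBoundWith p v A}

section Helpers

lemma haarCell_pi {d : ℕ} (n : ℤ) (k : Fin d → ℤ) :
    haarCell n k = Set.pi Set.univ (fun i =>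
      Ico ((2:ℝ)^(-n) * ((k i : ℝ) - 1/2)) ((2:ℝ)^(-n) * ((k i : ℝ) + 1/2))) := by
  ext x
  have h2 : (0:ℝ) < (2:ℝ)^n := by positivity
  simp only [haarCell, haarIdx, Set.mem_setOf_eq, Set.mem_pi, Set.mem_univ, forall_true_left,
    Set.mem_Ico, funext_iff]
  refine forall_congr' fun i => ?_
  rw [Int.floor_eq_iff]
  have key : (2:ℝ)^n * (2:ℝ)^(-n) = 1 := by
    rw [← zpow_add₀ (two_ne_zero), add_neg_cancel, zpow_zero]
  have hm : (0:ℝ) < (2:ℝ)^(-n) := by positivity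
  have key2 : (2:ℝ)^(-n) * (2:ℝ)^n = 1 := by
    rw [← zpow_add₀ (two_ne_zero), neg_add_cancel, zpow_zero]
  constructor
  · rintro ⟨h1, h3⟩
    have h1' := mul_le_mul_of_nonneg_left h1 hm.le
    have h3' := mul_lt_mul_of_pos_left h3 hm
    rw [mul_add, ← mul_assoc, key2, one_mul] at h1' h3'
    constructor <;> nlinarith
  · rintro ⟨h1, h3⟩
    have h1' := mul_le_mul_of_nonneg_left h1 h2.le
    have h3' := mul_lt_mul_of_pos_left h3 h2
    rw [← mul_assoc, key, one_mul] at h1' h3'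
    constructor <;> nlinarith

lemma measurableSet_haarCell {d : ℕ} (n : ℤ) (k : Fin d → ℤ) :
    MeasurableSet (haarCell n k) := by
  rw [haarCell_pi]
  exact MeasurableSet.univ_pi fun i => measurableSet_Ico

lemma volume_haarCell {d : ℕ} (n : ℤ) (k : Fin d → ℤ) :
    volume (haarCell n k) = ENNReal.ofReal (((2:ℝ)^(-n))^d) := by
  rw [haarCell_pi, volume_pi_pi]
  have h : ∀ i : Fin d, volume (Ico ((2:ℝ)^(-n) * ((k i : ℝ) - 1/2)) ((2:ℝ)^(-n) * ((k i : ℝ) + 1/2)))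
      = ENNReal.ofReal ((2:ℝ)^(-n)) := by
    intro i
    rw [Real.volume_Ico]
    ring_nf
  simp only [h, Finset.prod_const, Finset.card_univ, Fintype.card_fin]
  rw [← ENNReal.ofReal_pow (by positivity)]

lemma mem_haarCell_dist {d : ℕ} (n : ℤ) (k : Fin d → ℤ) {x : Fin d → ℝ}
    (hx : x ∈ haarCell n k) : ‖x - lamOf n k‖ ≤ (2:ℝ)^(-n) / 2 := by
  rw [haarCell_pi] at hx
  rw [pi_norm_le_iff_of_nonneg (by positivity)]
  intro i
  have := hx i (Set.mem_univ i)
  simp only [Set.mem_Ico] at this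
  rw [Pi.sub_apply, Real.norm_eq_abs, abs_le]
  simp only [lamOf]
  constructor <;> nlinarith [this.1, this.2]

lemma le_rK {d : ℕ} (K : (Fin d → ℝ) → (Fin d → ℝ) → ℂ) {t x y : Fin d → ℝ}
    (h : ‖t‖ ≤ ‖x - y‖) : (‖K x y‖₊ : ℝ≥0∞) ≤ rK K t :=
  le_iSup₂_of_le x y (le_iSup_of_le h le_rfl)

lemma ennnorm_haarPhi {d : ℕ} (n : ℤ) (k : Fin d → ℤ) (x : Fin d → ℝ) :
    (‖(haarPhi n k x : ℂ)‖₊ : ℝ≥0∞) =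
      Set.indicator (haarCell n k)
        (fun _ => ENNReal.ofReal ((2:ℝ) ^ (((n : ℝ) * (d : ℝ)) / 2))) x := by
  rw [Set.indicator, haarPhi]
  simp only [haarCell, Set.mem_setOf_eq]
  split_ifs with h <;>
    simp [Complex.nnnorm_real, ← enorm_eq_nnnorm, Real.enorm_eq_ofReal_abs, Real.norm_eq_abs,
      abs_of_pos (rpow_pos_of_pos (by norm_num : (0:ℝ) < 2) _)]

lemma lint_ind {α : Type*} [MeasurableSpace α] {μ : Measure α}
    (s : Set α) (hs : MeasurableSet s) (c : ℝ≥0∞) (hc : c ≠ ⊤) (g : α → ℝ≥0∞) :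
    ∫⁻ y, g y * s.indicator (fun _ => c) y ∂μ = c * ∫⁻ y in s, g y ∂μ := by
  classical
  have h : ∀ y, g y * s.indicator (fun _ => c) y = s.indicator (fun y => c * g y) y := by
    intro y
    rw [Set.indicator_apply, Set.indicator_apply]
    split_ifs
    · ring
    · rw [mul_zero]
  rw [lintegral_congr h, lintegral_indicator hs, lintegral_const_mul' _ _ hc]

lemma aMat_nnnorm_le {d : ℕ} (K : (Fin d → ℝ) → (Fin d → ℝ) → ℂ) (n : ℤ) (k k' : Fin d → ℤ) :
    (‖aMat K n k k'‖₊ : ℝ≥0∞) ≤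
      ENNReal.ofReal ((2:ℝ)^(n*(d:ℤ))) *
        (ENNReal.ofReal ((2:ℝ)^(((n:ℝ)*(d:ℝ))/2)) *
          (ENNReal.ofReal ((2:ℝ)^(((n:ℝ)*(d:ℝ))/2)) *
            ∫⁻ x in haarCell n k, ∫⁻ y in haarCell n k', (‖K x y‖₊ : ℝ≥0∞))) := by
  classical
  set cE := ENNReal.ofReal ((2:ℝ)^(((n:ℝ)*(d:ℝ))/2)) with hcE
  set ind : (Fin d → ℝ) → ℝ≥0∞ := (haarCell n k).indicator (fun _ => cE) with hind
  set ind' : (Fin d → ℝ) → ℝ≥0∞ := (haarCell n k').indicator (fun _ => cE) with hind'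
  have hcEne : cE ≠ ⊤ := ENNReal.ofReal_ne_top
  have hindne : ∀ x, ind x ≠ ⊤ := by
    intro x
    rw [hind, Set.indicator_apply]
    split_ifs <;> simp [hcEne]
  have hpt : ∀ x y, (‖(haarPhi n k x : ℂ) * K x y * (haarPhi n k' y : ℂ)‖₊ : ℝ≥0∞)
      = (ind x * (‖K x y‖₊ : ℝ≥0∞)) * ind' y := by
    intro x y
    rw [nnnorm_mul, nnnorm_mul, ENNReal.coe_mul, ENNReal.coe_mul,
      ennnorm_haarPhi, ennnorm_haarPhi]
  have h0 : (‖aMat K n k k'‖₊ : ℝ≥0∞) ≤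
      ENNReal.ofReal ((2:ℝ)^(n*(d:ℤ))) *
        ∫⁻ x, ∫⁻ y, (‖(haarPhi n k x : ℂ) * K x y * (haarPhi n k' y : ℂ)‖₊ : ℝ≥0∞) := by
    rw [aMat, nnnorm_smul, ENNReal.coe_mul,
      ← enorm_eq_nnnorm, Real.enorm_eq_ofReal (by positivity : (0:ℝ) ≤ (2:ℝ)^(n*(d:ℤ)))]
    refine mul_le_mul_right ?_ _
    refine le_trans (enorm_integral_le_lintegral_enorm _) ?_
    exact lintegral_mono fun x => enorm_integral_le_lintegral_enorm _
  refine le_trans h0 ?_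
  refine mul_le_mul_right (le_of_eq ?_) _
  calc ∫⁻ x, ∫⁻ y, (‖(haarPhi n k x : ℂ) * K x y * (haarPhi n k' y : ℂ)‖₊ : ℝ≥0∞)
      = ∫⁻ x, cE * (ind x * ∫⁻ y in haarCell n k', (‖K x y‖₊ : ℝ≥0∞)) := by
        refine lintegral_congr fun x => ?_
        rw [lintegral_congr (hpt x),
          lint_ind _ (measurableSet_haarCell n k') cE hcEne _,
          lintegral_const_mul' _ _ (hindne x)]
    _ = cE * ∫⁻ x, (∫⁻ y in haarCell n k', (‖K x y‖₊ : ℝ≥0∞)) * ind x := by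
        rw [lintegral_const_mul' _ _ hcEne]
        congr 1
        exact lintegral_congr fun x => by ring
    _ = cE * (cE * ∫⁻ x in haarCell n k, ∫⁻ y in haarCell n k', (‖K x y‖₊ : ℝ≥0∞)) := by
        rw [lint_ind _ (measurableSet_haarCell n k) cE hcEne _]

end Helpers

/-- Proposition 2.7: off-diagonal decay of the discretization matrices.
Here `λ = 2^{-n}k`, `λ' = 2^{-n}k'`. -/
theorem matrix_offdiagonal_decay {d : ℕ}
    (K : (Fin d → ℝ) → (Fin d → ℝ) → ℂ) (hKm : Measurable (Function.uncurry K))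
    (hK : (∫⁻ x, rK K x) < ⊤) (n : ℤ) (k k' : Fin d → ℤ) :
    (‖lamOf n k - lamOf n k'‖ ≤ (2:ℝ) ^ (-n + 1) →
      (‖aMat K n k k'‖₊ : ℝ≥0∞) ≤
        ENNReal.ofReal ((2:ℝ) ^ (n * (d:ℤ))) *
          ∫⁻ t in {t : Fin d → ℝ | ‖t‖ ≤ 3 * (2:ℝ) ^ (-n)}, rK K t) ∧
    ((2:ℝ) ^ (-n + 1) < ‖lamOf n k - lamOf n k'‖ →
      (‖aMat K n k k'‖₊ : ℝ≥0∞) ≤ rK K ((1/2 : ℝ) • (lamOf n k - lamOf n k'))) := by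
  classical
  have h2n : (0:ℝ) < (2:ℝ)^(-n) := by positivity
  have h21 : (2:ℝ)^(-n+1) = 2 * (2:ℝ)^(-n) := by
    rw [zpow_add₀ (two_ne_zero), zpow_one]; ring
  set c0 : ℝ := (2:ℝ)^(n*(d:ℤ)) with hc0
  set c : ℝ := (2:ℝ)^(((n:ℝ)*(d:ℝ))/2) with hc
  set v : ℝ := ((2:ℝ)^(-n : ℤ))^d with hv
  have hc0pos : (0:ℝ) < c0 := by positivity
  have hcpos : (0:ℝ) < c := rpow_pos_of_pos two_pos _
  have hvpos : (0:ℝ) < v := by positivity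
  have hcc : c * c = c0 := by
    rw [hc, ← Real.rpow_add two_pos, hc0, ← Real.rpow_intCast]
    push_cast
    ring_nf
  have hc0v : c0 * v = 1 := by
    rw [hv, hc0, ← zpow_natCast ((2:ℝ)^(-n : ℤ)) d, ← zpow_mul, ← zpow_add₀ (two_ne_zero)]
    rw [show n * (d:ℤ) + -n * (d:ℤ) = 0 by ring, zpow_zero]
  set J := ∫⁻ x in haarCell n k, ∫⁻ y in haarCell n k', (‖K x y‖₊ : ℝ≥0∞) with hJ
  have hbase := aMat_nnnorm_le K n k k'
  rw [← hc0, ← hc, ← hJ] at hbase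
  constructor
  · -- near-diagonal case
    intro hnear
    rw [h21] at hnear
    set B := ∫⁻ t in {t : Fin d → ℝ | ‖t‖ ≤ 3 * (2:ℝ)^(-n)}, rK K t with hB
    have hJle : J ≤ ENNReal.ofReal v * B := by
      have hxs : ∀ x ∈ haarCell n k,
          (∫⁻ y in haarCell n k', (‖K x y‖₊ : ℝ≥0∞)) ≤ B := by
        intro x hx
        have hsub : haarCell n k' ⊆
            (fun y => x - y) ⁻¹' {t : Fin d → ℝ | ‖t‖ ≤ 3 * (2:ℝ)^(-n)} := by
          intro y hy
          have d1 := mem_haarCell_dist n k hx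
          have d2 := mem_haarCell_dist n k' hy
          simp only [Set.mem_preimage, Set.mem_setOf_eq]
          have hdecomp : x - y = (x - lamOf n k) + (lamOf n k - lamOf n k') + (lamOf n k' - y) := by
            abel
          have htri : ‖x - y‖ ≤ ‖x - lamOf n k‖ + ‖lamOf n k - lamOf n k'‖ + ‖lamOf n k' - y‖ := by
            rw [hdecomp]; exact norm_add₃_le
          rw [norm_sub_rev (lamOf n k') y] at htri
          linarith
        calc (∫⁻ y in haarCell n k', (‖K x y‖₊ : ℝ≥0∞))
            ≤ ∫⁻ y in haarCell n k', rK K (x - y) :=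
              lintegral_mono fun y => le_rK K le_rfl
          _ ≤ ∫⁻ y in (fun y => x - y) ⁻¹' {t : Fin d → ℝ | ‖t‖ ≤ 3 * (2:ℝ)^(-n)},
                rK K (x - y) := lintegral_mono_set hsub
          _ = B := (Measure.measurePreserving_sub_left volume x).setLIntegral_comp_preimage_emb
              (MeasurableEquiv.subLeft x).measurableEmbedding (rK K) _
      calc J ≤ ∫⁻ _ in haarCell n k, B := setLIntegral_mono measurable_const hxs
        _ = B * volume (haarCell n k) := setLIntegral_const _ _
        _ = ENNReal.ofReal v * B := by rw [volume_haarCell, ← hv, mul_comm]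
    have hconst : c0 * c * c * v = c0 := by
      rw [mul_assoc c0 c c, hcc, mul_assoc, hc0v, mul_one]
    calc (‖aMat K n k k'‖₊ : ℝ≥0∞)
        ≤ ENNReal.ofReal c0 * (ENNReal.ofReal c * (ENNReal.ofReal c * J)) := hbase
      _ ≤ ENNReal.ofReal c0 * (ENNReal.ofReal c * (ENNReal.ofReal c *
            (ENNReal.ofReal v * B))) := by gcongr
      _ = (ENNReal.ofReal c0 * ENNReal.ofReal c * ENNReal.ofReal c * ENNReal.ofReal v) * B := by
          ring
      _ = ENNReal.ofReal (c0 * c * c * v) * B := by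
          rw [ENNReal.ofReal_mul (by positivity), ENNReal.ofReal_mul (by positivity),
            ENNReal.ofReal_mul hc0pos.le]
      _ = ENNReal.ofReal c0 * B := by rw [hconst]
  · -- far-off-diagonal case
    intro hfar
    rw [h21] at hfar
    set M := rK K ((1/2 : ℝ) • (lamOf n k - lamOf n k')) with hM
    have hgle : ∀ x ∈ haarCell n k, ∀ y ∈ haarCell n k', (‖K x y‖₊ : ℝ≥0∞) ≤ M := by
      intro x hx y hy
      apply le_rK
      have d1 := mem_haarCell_dist n k hx
      have d2 := mem_haarCell_dist n k' hy
      have hdecomp : lamOf n k - lamOf n k'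
          = (lamOf n k - x) + (x - y) + (y - lamOf n k') := by abel
      have htri : ‖lamOf n k - lamOf n k'‖
          ≤ ‖lamOf n k - x‖ + ‖x - y‖ + ‖y - lamOf n k'‖ := by
        rw [hdecomp]; exact norm_add₃_le
      rw [norm_sub_rev (lamOf n k) x] at htri
      rw [norm_smul, Real.norm_eq_abs, show |(1/2 : ℝ)| = 1/2 by norm_num]
      linarith
    have hJle : J ≤ ENNReal.ofReal v * (ENNReal.ofReal v * M) := by
      calc J ≤ ∫⁻ _ in haarCell n k, ∫⁻ _ in haarCell n k', M :=
            setLIntegral_mono measurable_const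
              (fun x hx => setLIntegral_mono measurable_const (fun y hy => hgle x hx y hy))
        _ = M * volume (haarCell n k') * volume (haarCell n k) := by
            rw [setLIntegral_const, setLIntegral_const]
        _ = ENNReal.ofReal v * (ENNReal.ofReal v * M) := by
            rw [volume_haarCell, volume_haarCell, ← hv]; ring
    have hconst : c0 * c * c * v * v = 1 := by
      rw [mul_assoc c0 c c, hcc]
      calc c0 * c0 * v * v = (c0 * v) * (c0 * v) := by ring
        _ = 1 := by rw [hc0v, mul_one]
    calc (‖aMat K n k k'‖₊ : ℝ≥0∞)
        ≤ ENNReal.ofReal c0 * (ENNReal.ofReal c * (ENNReal.ofReal c * J)) := hbase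
      _ ≤ ENNReal.ofReal c0 * (ENNReal.ofReal c * (ENNReal.ofReal c *
            (ENNReal.ofReal v * (ENNReal.ofReal v * M)))) := by gcongr
      _ = (ENNReal.ofReal c0 * ENNReal.ofReal c * ENNReal.ofReal c * ENNReal.ofReal v *
            ENNReal.ofReal v) * M := by ring
      _ = ENNReal.ofReal (c0 * c * c * v * v) * M := by
          rw [ENNReal.ofReal_mul (by positivity), ENNReal.ofReal_mul (by positivity),
            ENNReal.ofReal_mul (by positivity), ENNReal.ofReal_mul hc0pos.le]
      _ = M := by rw [hconst, ENNReal.ofReal_one, one_mul]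

end
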